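/- Let p be a prime, k ≥ 2 with k | p−1, ψ a multiplicative character of F_p of order k, and f_k(x) = Σ_{i=1}^{k−1} ψ^i(x). For any nonzero y ∈ F_p, |Σ_{x∈F_p} f_k(x)^2 f_k(x+y)^2| ≤ (k−1)^2 p + ((k−1)^4 − (k−1)^2)√p. -/

import Mathlib

open Finset

section Aux

variable {p : ℕ} [Fact p.Prime]

private lemma conj_gaussSum (χ : MulChar (ZMod p) ℂ) (ψ : AddChar (ZMod p) ℂ) :
    (starRingEnd ℂ) (gaussSum χ ψ) = gaussSum χ⁻¹ ψ⁻¹ := by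
  have hp : p.Prime := Fact.out
  have hchar : 0 < ringChar (ZMod p) := by
    rw [ZMod.ringChar_zmod_n]; exact hp.pos
  rw [gaussSum, gaussSum, map_sum]
  refine Finset.sum_congr rfl fun x _ => ?_
  rw [map_mul, ← MulChar.star_apply' χ x, ← AddChar.starComp_apply hchar x, starRingEnd_apply,
    starRingEnd_apply]

private lemma abs_gaussSum {χ : MulChar (ZMod p) ℂ} (hχ : χ ≠ 1) {ψ : AddChar (ZMod p) ℂ}
    (hprim : ψ.IsPrimitive) : ‖gaussSum χ ψ‖ = Real.sqrt p := by
  have h := gaussSum_mul_gaussSum_eq_card hχ hprim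
  rw [← conj_gaussSum, Complex.mul_conj, ZMod.card] at h
  have hnq : Complex.normSq (gaussSum χ ψ) = (p : ℝ) := by
    exact_mod_cast h
  rw [Complex.norm_def, hnq]

private lemma abs_jacobiSum_le (χ φ : MulChar (ZMod p) ℂ) (h : ¬(χ = 1 ∧ φ = 1)) :
    ‖jacobiSum χ φ‖ ≤ Real.sqrt p := by
  have hp : p.Prime := Fact.out
  have h1p : (1 : ℝ) ≤ Real.sqrt p := by
    rw [show (1:ℝ) = Real.sqrt 1 by simp]
    exact Real.sqrt_le_sqrt (by exact_mod_cast hp.one_lt.le)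
  -- a primitive additive character
  have hpr : IsPrimitiveRoot (Complex.exp (2 * Real.pi * Complex.I / p)) p :=
    Complex.isPrimitiveRoot_exp p hp.ne_zero
  haveI : NeZero p := ⟨hp.ne_zero⟩
  set ψ₀ : AddChar (ZMod p) ℂ := AddChar.zmodChar p (hpr.pow_eq_one) with hψ₀
  have hprim : ψ₀.IsPrimitive := AddChar.zmodChar_primitive_of_primitive_root p hpr
  by_cases hχ : χ = 1
  · have hφ : φ ≠ 1 := fun hh => h ⟨hχ, hh⟩
    rw [hχ, jacobiSum_one_nontrivial hφ]
    simpa using h1p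
  · by_cases hφ : φ = 1
    · rw [hφ, jacobiSum_comm, jacobiSum_one_nontrivial hχ]
      simpa using h1p
    · by_cases hχφ : χ * φ = 1
      · have : φ = χ⁻¹ := by
          rw [eq_inv_of_mul_eq_one_right hχφ]
        rw [this, jacobiSum_nontrivial_inv hχ, norm_neg]
        calc ‖χ (-1)‖ = ‖χ (-1)‖ := rfl
          _ ≤ 1 := DirichletCharacter.norm_le_one χ (-1)
          _ ≤ Real.sqrt p := h1p
      · have key := jacobiSum_mul_nontrivial hχφ ψ₀
        have habs := congrArg (‖·‖) key
        rw [norm_mul, norm_mul, abs_gaussSum hχφ hprim, abs_gaussSum hχ hprim,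
          abs_gaussSum hφ hprim] at habs
        have hsp : (0:ℝ) < Real.sqrt p := lt_of_lt_of_le one_pos h1p
        exact le_of_eq (mul_left_cancel₀ hsp.ne' habs)

private lemma sum_shift_eq (χ φ : MulChar (ZMod p) ℂ) {y : ZMod p} (hy : y ≠ 0) :
    ∑ x : ZMod p, χ x * φ (x + y) = χ (-y) * φ y * jacobiSum χ φ := by
  rw [jacobiSum, Finset.mul_sum]
  refine (Fintype.sum_bijective (fun t : ZMod p => -y * t)
    (mulLeft_bijective₀ (-y) (neg_ne_zero.mpr hy)) _ _ fun t => ?_).symm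
  have h1 : -y * t + y = y * (1 - t) := by ring
  rw [h1, map_mul χ, map_mul φ]
  ring

private lemma abs_sum_shift_le (χ φ : MulChar (ZMod p) ℂ) {y : ZMod p} (hy : y ≠ 0)
    (h : ¬(χ = 1 ∧ φ = 1)) :
    ‖∑ x : ZMod p, χ x * φ (x + y)‖ ≤ Real.sqrt p := by
  rw [sum_shift_eq χ φ hy, norm_mul, norm_mul]
  have h1 : ‖χ (-y)‖ ≤ 1 := DirichletCharacter.norm_le_one χ (-y)
  have h2 : ‖φ y‖ ≤ 1 := DirichletCharacter.norm_le_one φ y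
  have n2 : 0 ≤ ‖φ y‖ := norm_nonneg _
  have n3 : 0 ≤ ‖jacobiSum χ φ‖ := norm_nonneg _
  calc ‖χ (-y)‖ * ‖φ y‖ * ‖jacobiSum χ φ‖
      ≤ 1 * 1 * ‖jacobiSum χ φ‖ :=
        mul_le_mul (mul_le_mul h1 h2 n2 zero_le_one) le_rfl n3 (by norm_num)
    _ = ‖jacobiSum χ φ‖ := by ring
    _ ≤ Real.sqrt p := abs_jacobiSum_le χ φ h

private lemma abs_sum_shift_le_card (χ φ : MulChar (ZMod p) ℂ) (y : ZMod p) :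
    ‖∑ x : ZMod p, χ x * φ (x + y)‖ ≤ p := by
  calc ‖∑ x : ZMod p, χ x * φ (x + y)‖
      ≤ ∑ x : ZMod p, ‖χ x * φ (x + y)‖ := norm_sum_le _ _
    _ ≤ ∑ _x : ZMod p, 1 := by
        refine Finset.sum_le_sum fun x _ => ?_
        rw [norm_mul]
        calc ‖χ x‖ * ‖φ (x + y)‖
            ≤ 1 * 1 := mul_le_mul (DirichletCharacter.norm_le_one χ x)
              (DirichletCharacter.norm_le_one φ (x + y)) (norm_nonneg _) zero_le_one
          _ = 1 := by ring
    _ = p := by simp [ZMod.card]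

end Aux

theorem stmt_9 {p k : ℕ} [Fact p.Prime] (hk : 2 ≤ k) (hkp : k ∣ p - 1)
    (ψ : MulChar (ZMod p) ℂ) (hψ : orderOf ψ = k) (y : ZMod p) (hy : y ≠ 0) :
    ‖∑ x : ZMod p,
        (∑ i ∈ Finset.Ico 1 k, (ψ ^ i) x) ^ 2 * (∑ i ∈ Finset.Ico 1 k, (ψ ^ i) (x + y)) ^ 2‖
      ≤ ((k : ℝ) - 1) ^ 2 * p + (((k : ℝ) - 1) ^ 4 - ((k : ℝ) - 1) ^ 2) * Real.sqrt p := by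
  have hp : p.Prime := Fact.out
  have h1p : (1 : ℝ) ≤ Real.sqrt p := by
    rw [show (1:ℝ) = Real.sqrt 1 by simp]
    exact Real.sqrt_le_sqrt (by exact_mod_cast hp.one_lt.le)
  have hp1 : (1:ℝ) ≤ (p:ℝ) := by exact_mod_cast hp.one_lt.le
  have hsp_le : Real.sqrt p ≤ (p : ℝ) := by
    calc Real.sqrt p ≤ Real.sqrt ((p:ℝ)^2) := Real.sqrt_le_sqrt (by nlinarith)
      _ = (p:ℝ) := Real.sqrt_sq (by positivity)
  set P : Finset (ℕ × ℕ) := Finset.Ico 1 k ×ˢ Finset.Ico 1 k with hP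
  -- expand the squares
  have key : ∀ z : ZMod p, (∑ i ∈ Finset.Ico 1 k, (ψ ^ i) z) ^ 2
      = ∑ q ∈ P, (ψ ^ (q.1 + q.2)) z := by
    intro z
    rw [sq, Finset.sum_mul_sum, hP, Finset.sum_product]
    refine Finset.sum_congr rfl fun i _ => Finset.sum_congr rfl fun j _ => ?_
    rw [pow_add, MulChar.mul_apply]
  have expand : ∑ x : ZMod p,
      (∑ i ∈ Finset.Ico 1 k, (ψ ^ i) x) ^ 2 * (∑ i ∈ Finset.Ico 1 k, (ψ ^ i) (x + y)) ^ 2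
      = ∑ q ∈ P, ∑ r ∈ P, ∑ x : ZMod p, (ψ ^ (q.1 + q.2)) x * (ψ ^ (r.1 + r.2)) (x + y) := by
    simp_rw [key, Finset.sum_mul_sum]
    rw [Finset.sum_comm]
    exact Finset.sum_congr rfl fun q _ => Finset.sum_comm
  -- indicator function
  set u : ℕ × ℕ → ℝ := fun q => if k ∣ q.1 + q.2 then 1 else 0 with hu
  have hu01 : ∀ q, 0 ≤ u q ∧ u q ≤ 1 := by
    intro q; simp only [hu]; split <;> norm_num
  -- pointwise bound
  have pointwise : ∀ q ∈ P, ∀ r ∈ P,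
      ‖∑ x : ZMod p, (ψ ^ (q.1 + q.2)) x * (ψ ^ (r.1 + r.2)) (x + y)‖
        ≤ Real.sqrt p + u q * u r * ((p : ℝ) - Real.sqrt p) := by
    intro q _ r _
    by_cases hcase : k ∣ q.1 + q.2 ∧ k ∣ r.1 + r.2
    · have huq : u q = 1 := by rw [hu]; simp [hcase.1]
      have hur : u r = 1 := by rw [hu]; simp [hcase.2]
      rw [huq, hur]
      calc ‖∑ x : ZMod p, (ψ ^ (q.1 + q.2)) x * (ψ ^ (r.1 + r.2)) (x + y)‖
          ≤ (p : ℝ) := abs_sum_shift_le_card _ _ y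
        _ = Real.sqrt p + 1 * 1 * ((p : ℝ) - Real.sqrt p) := by ring
    · have hnt : ¬(ψ ^ (q.1 + q.2) = 1 ∧ ψ ^ (r.1 + r.2) = 1) := by
        intro ⟨h1, h2⟩
        exact hcase ⟨hψ ▸ orderOf_dvd_of_pow_eq_one h1, hψ ▸ orderOf_dvd_of_pow_eq_one h2⟩
      calc ‖∑ x : ZMod p, (ψ ^ (q.1 + q.2)) x * (ψ ^ (r.1 + r.2)) (x + y)‖
          ≤ Real.sqrt p := abs_sum_shift_le _ _ hy hnt
        _ ≤ Real.sqrt p + u q * u r * ((p : ℝ) - Real.sqrt p) := by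
            have h1 := (hu01 q).1; have h2 := (hu01 r).1
            have : 0 ≤ u q * u r * ((p : ℝ) - Real.sqrt p) :=
              mul_nonneg (mul_nonneg h1 h2) (by linarith)
            linarith
  -- sum of the indicator
  have sum_u : ∑ q ∈ P, u q = (k : ℝ) - 1 := by
    rw [hP, Finset.sum_product]
    have inner : ∀ i ∈ Finset.Ico 1 k, ∑ j ∈ Finset.Ico 1 k, u (i, j) = 1 := by
      intro i hi
      rw [Finset.mem_Ico] at hi
      have : ∀ j ∈ Finset.Ico 1 k, u (i, j) = if j = k - i then 1 else 0 := by
        intro j hj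
        rw [Finset.mem_Ico] at hj
        rw [hu]
        simp only
        congr 1
        simp only [eq_iff_iff]
        constructor
        · intro hd
          have hne : i + j ≠ 0 := by omega
          have hlt : i + j < 2 * k := by omega
          have := Nat.eq_of_dvd_of_lt_two_mul hne hd hlt
          omega
        · intro hj'
          exact ⟨1, by omega⟩
      rw [Finset.sum_congr rfl this, Finset.sum_ite_eq' (Finset.Ico 1 k) (k - i) (fun _ => (1:ℝ))]
      rw [if_pos]
      rw [Finset.mem_Ico]
      omega
    rw [Finset.sum_congr rfl inner, Finset.sum_const, Nat.card_Ico, nsmul_eq_mul, mul_one]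
    have : (1:ℕ) ≤ k := by omega
    push_cast [Nat.cast_sub this]
    ring
  have card_P : (P.card : ℝ) = ((k : ℝ) - 1) ^ 2 := by
    rw [hP, Finset.card_product, Nat.card_Ico]
    have : (1:ℕ) ≤ k := by omega
    push_cast [Nat.cast_sub this]
    ring
  -- put it all together
  rw [expand]
  calc ‖∑ q ∈ P, ∑ r ∈ P, ∑ x : ZMod p, (ψ ^ (q.1 + q.2)) x * (ψ ^ (r.1 + r.2)) (x + y)‖
      ≤ ∑ q ∈ P, ∑ r ∈ P,
          ‖∑ x : ZMod p, (ψ ^ (q.1 + q.2)) x * (ψ ^ (r.1 + r.2)) (x + y)‖ := by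
        refine (norm_sum_le _ _).trans (Finset.sum_le_sum fun q _ => norm_sum_le _ _)
    _ ≤ ∑ q ∈ P, ∑ r ∈ P, (Real.sqrt p + u q * u r * ((p : ℝ) - Real.sqrt p)) := by
        exact Finset.sum_le_sum fun q hq => Finset.sum_le_sum fun r hr => pointwise q hq r hr
    _ = (P.card : ℝ) * (P.card : ℝ) * Real.sqrt p
        + (∑ q ∈ P, u q) * (∑ r ∈ P, u r) * ((p : ℝ) - Real.sqrt p) := by
        have step : ∀ q : ℕ × ℕ, ∑ r ∈ P, (Real.sqrt p + u q * u r * ((p : ℝ) - Real.sqrt p))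
            = (P.card : ℝ) * Real.sqrt p + u q * ((∑ r ∈ P, u r) * ((p : ℝ) - Real.sqrt p)) := by
          intro q
          rw [Finset.sum_add_distrib, Finset.sum_const, nsmul_eq_mul]
          congr 1
          rw [← Finset.sum_mul, ← Finset.mul_sum, mul_assoc]
        rw [Finset.sum_congr rfl fun q _ => step q, Finset.sum_add_distrib, Finset.sum_const,
          nsmul_eq_mul, ← Finset.sum_mul]
        ring
    _ = ((k : ℝ) - 1) ^ 2 * p + (((k : ℝ) - 1) ^ 4 - ((k : ℝ) - 1) ^ 2) * Real.sqrt p := by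
        rw [card_P, sum_u]
        ring
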